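/- Let X, Y be real random variables with Var(X) = Var(Y) = σ² > 0, correlation ρ, and μ = E[X − Y] ≥ 0. Let D, D' be i.i.d. copies of X − Y (over independent users). Then P({D > 0, D' < 0} ∪ {D < 0, D' > 0}) ≤ 4σ²(1 − ρ)/(μ² + 2σ²(1 − ρ)). -/

import Mathlib

open MeasureTheory ProbabilityTheory

/-- Covariance of two real random variables. -/
noncomputable def cov {Ω : Type*} [MeasureSpace Ω] (X Y : Ω → ℝ) : ℝ :=
  ∫ ω, (X ω - ∫ ω', X ω') * (Y ω - ∫ ω', Y ω')

private lemma l2_mul_integrable {Ω : Type*} [MeasureSpace Ω] [IsProbabilityMeasure (ℙ : Measure Ω)]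
    (f g : Ω → ℝ) (hf : MemLp f 2) (hg : MemLp g 2) : Integrable (fun ω => f ω * g ω) := by
  have := hf.smul hg (p := 2) (q := 2) (r := 1)
  exact memLp_one_iff_integrable.mp (by simpa [smul_eq_mul, mul_comm] using this : MemLp (f * g) 1)

private lemma l2_sq_integrable {Ω : Type*} [MeasureSpace Ω] [IsProbabilityMeasure (ℙ : Measure Ω)]
    (f : Ω → ℝ) (hf : MemLp f 2) : Integrable (fun ω => f ω ^ 2) := by
  simpa [pow_two] using hf.integrable_sq

private lemma variance_eq_integral {Ω : Type*} [MeasureSpace Ω]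
    [IsProbabilityMeasure (ℙ : Measure Ω)]
    (f : Ω → ℝ) (hf : MemLp f 2) (m : ℝ) (hm : m = ∫ ω, f ω) :
    variance f ℙ = ∫ ω, (f ω - m)^2 := by
  rw [ProbabilityTheory.variance_eq_integral hf.aemeasurable, hm]

/-- High correlation suppresses cross-user rank reversals:
for X, Y with Var X = Var Y = σ², correlation ρ, μ = E[X − Y] ≥ 0 and D, D'
i.i.d. copies of X − Y, the rank-reversal probability is at most
4σ²(1 − ρ)/(μ² + 2σ²(1 − ρ)). -/
theorem rank_reversal_bound_of_correlation
    {Ω : Type*} [MeasureSpace Ω] [IsProbabilityMeasure (ℙ : Measure Ω)]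
    (X Y : Ω → ℝ) (hX : MemLp X 2) (hY : MemLp Y 2)
    (σ2 : ℝ) (hσ2 : 0 < σ2)
    (hvarX : variance X ℙ = σ2) (hvarY : variance Y ℙ = σ2)
    (ρ : ℝ) (hρ : ρ = cov X Y / σ2)
    (μ : ℝ) (hμ : μ = ∫ ω, (X ω - Y ω)) (hμ0 : 0 ≤ μ)
    (hpos : 0 < μ ^ 2 + 2 * σ2 * (1 - ρ))
    (D D' : Ω → ℝ) (hD : Measurable D) (hD' : Measurable D')
    (hDid : IdentDistrib D (X - Y) ℙ ℙ) (hD'id : IdentDistrib D' (X - Y) ℙ ℙ)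
    (hindep : IndepFun D D' ℙ) :
    (ℙ ({ω | D ω > 0 ∧ D' ω < 0} ∪ {ω | D ω < 0 ∧ D' ω > 0})).toReal ≤
      4 * σ2 * (1 - ρ) / (μ ^ 2 + 2 * σ2 * (1 - ρ)) := by
  set v : ℝ := 2 * σ2 * (1 - ρ) with hv
  have hXint : Integrable X := hX.integrable one_le_two
  have hYint : Integrable Y := hY.integrable one_le_two
  set a : ℝ := ∫ ω, X ω with ha
  set b : ℝ := ∫ ω, Y ω with hb
  have hZ : MemLp (X - Y) 2 (ℙ : Measure Ω) := hX.sub hY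
  have hZ1 : Integrable (fun ω => X ω - Y ω) := hXint.sub hYint
  have hZ2 : Integrable (fun ω => (X ω - Y ω)^2) := by
    have := l2_sq_integrable _ hZ
    simpa [Pi.sub_apply] using this
  have hmean : (∫ ω, (X - Y) ω) = μ := by
    simp only [Pi.sub_apply]; rw [hμ]
  have hμab : μ = a - b := by
    rw [hμ, integral_sub hXint hYint]
  have hXc : MemLp (fun ω => X ω - a) 2 (ℙ : Measure Ω) := hX.sub (memLp_const a)
  have hYc : MemLp (fun ω => Y ω - b) 2 (ℙ : Measure Ω) := hY.sub (memLp_const b)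
  have hIX2 : Integrable (fun ω => (X ω - a)^2) := l2_sq_integrable _ hXc
  have hIY2 : Integrable (fun ω => (Y ω - b)^2) := l2_sq_integrable _ hYc
  have hIXY : Integrable (fun ω => (X ω - a) * (Y ω - b)) := l2_mul_integrable _ _ hXc hYc
  have hcov : cov X Y = ρ * σ2 := by
    rw [hρ]; field_simp
  -- variance of X - Y equals v
  have hvarZ : variance (X - Y) ℙ = v := by
    have h1 : variance (X - Y) ℙ = ∫ ω, ((X - Y) ω - μ)^2 :=
      variance_eq_integral _ hZ μ hmean.symm
    rw [h1]
    have h2 : (∫ ω, ((X - Y) ω - μ)^2)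
        = ∫ ω, ((X ω - a)^2 - 2 * ((X ω - a) * (Y ω - b)) + (Y ω - b)^2) := by
      refine integral_congr_ae (ae_of_all _ fun ω => ?_)
      simp only [Pi.sub_apply]; rw [hμab]; ring
    have hI0 : Integrable (fun ω => 2 * ((X ω - a) * (Y ω - b))) := hIXY.const_mul 2
    have hI1 : Integrable (fun ω => (X ω - a)^2 - 2 * ((X ω - a) * (Y ω - b))) := hIX2.sub hI0
    rw [h2, integral_add hI1 hIY2, integral_sub hIX2 hI0, integral_const_mul]
    have e1 : (∫ ω, (X ω - a)^2) = σ2 := by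
      rw [← hvarX, variance_eq_integral _ hX a ha]
    have e2 : (∫ ω, (Y ω - b)^2) = σ2 := by
      rw [← hvarY, variance_eq_integral _ hY b hb]
    have e3 : (∫ ω, (X ω - a) * (Y ω - b)) = ρ * σ2 := by
      rw [← hcov]; rfl
    rw [e1, e2, e3, hv]; ring
  have hv0 : 0 ≤ v := hvarZ ▸ variance_nonneg _ _
  have hden : (0:ℝ) < μ ^ 2 + v := hpos
  -- second moment of X - Y
  have hintZ2 : (∫ ω, (X ω - Y ω)^2) = v + μ^2 := by
    have h1 := variance_eq_integral _ hZ μ hmean.symm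
    rw [hvarZ] at h1
    have h2 : (∫ ω, ((X - Y) ω - μ)^2)
        = ∫ ω, ((X ω - Y ω)^2 - 2*μ*(X ω - Y ω) + μ^2) := by
      refine integral_congr_ae (ae_of_all _ fun ω => ?_)
      simp only [Pi.sub_apply]; ring
    have hJ0 : Integrable (fun ω => 2*μ*(X ω - Y ω)) := hZ1.const_mul (2*μ)
    have hJ1 : Integrable (fun ω => (X ω - Y ω)^2 - 2*μ*(X ω - Y ω)) := hZ2.sub hJ0
    rw [h2, integral_add hJ1 (integrable_const _), integral_sub hZ2 hJ0,
      integral_const_mul, ← hμ, integral_const] at h1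
    simp only [measure_univ, ENNReal.toReal_one, probReal_univ, smul_eq_mul, one_mul] at h1
    nlinarith [h1]
  -- Cantelli: ℙ(X - Y < 0) ≤ v / (μ² + v)
  have cantelli : (ℙ {ω | (X - Y) ω < 0}).toReal ≤ v / (μ ^ 2 + v) := by
    rcases eq_or_lt_of_le hμ0 with hμz | hμpos
    · have hvpos : 0 < v := by nlinarith
      have hone : v / (μ ^ 2 + v) = 1 := by rw [← hμz]; field_simp; ring
      rw [hone]
      exact le_trans (ENNReal.toReal_mono ENNReal.one_ne_top prob_le_one) (by norm_num)
    · set t : ℝ := v / μ with ht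
      have ht0 : 0 ≤ t := div_nonneg hv0 hμ0
      set c : ℝ := μ + t with hc
      have hcpos : 0 < c := by positivity
      set f : Ω → ℝ := fun ω => (X ω - Y ω - c)^2 with hf
      have hfc : MemLp (fun ω => X ω - Y ω - c) 2 (ℙ : Measure Ω) := by
        have := hZ.sub (memLp_const c)
        exact this
      have hfint : Integrable f := l2_sq_integrable _ hfc
      have hfnn : 0 ≤ᵐ[(ℙ : Measure Ω)] f := ae_of_all _ fun ω => sq_nonneg _
      have markov := mul_meas_ge_le_integral_of_nonneg hfnn hfint (c^2)
      have hintf : (∫ ω, f ω) = v + t^2 := by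
        have h2 : (∫ ω, f ω)
            = ∫ ω, ((X ω - Y ω)^2 - 2*c*(X ω - Y ω) + c^2) := by
          refine integral_congr_ae (ae_of_all _ fun ω => ?_)
          rw [hf]; ring
        have hK0 : Integrable (fun ω => 2*c*(X ω - Y ω)) := hZ1.const_mul (2*c)
        have hK1 : Integrable (fun ω => (X ω - Y ω)^2 - 2*c*(X ω - Y ω)) := hZ2.sub hK0
        rw [h2, integral_add hK1 (integrable_const _), integral_sub hZ2 hK0,
          integral_const_mul, ← hμ, integral_const, hintZ2]
        simp only [measure_univ, ENNReal.toReal_one, probReal_univ, smul_eq_mul, one_mul]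
        rw [hc]; ring
      have hsub : {ω | (X - Y) ω < 0} ⊆ {x | c^2 ≤ f x} := by
        intro ω hω
        simp only [Pi.sub_apply, Set.mem_setOf_eq] at hω ⊢
        show c^2 ≤ (X ω - Y ω - c)^2
        nlinarith [mul_pos (neg_pos.mpr hω) (by linarith : (0:ℝ) < 2*c - (X ω - Y ω))]
      have hPle : (ℙ {ω | (X - Y) ω < 0}).toReal ≤ (ℙ {x | c^2 ≤ f x}).toReal :=
        ENNReal.toReal_mono (measure_ne_top _ _) (measure_mono hsub)
      have hc2 : (0:ℝ) < c^2 := by positivity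
      have step : (ℙ {ω | (X - Y) ω < 0}).toReal ≤ (v + t^2) / c^2 := by
        calc (ℙ {ω | (X - Y) ω < 0}).toReal ≤ (ℙ {x | c^2 ≤ f x}).toReal := hPle
          _ ≤ (v + t^2) / c^2 := by
              rw [le_div_iff₀ hc2, ← hintf]
              linarith [show (ℙ {x | c^2 ≤ f x}).toReal * c^2 ≤ ∫ x, f x from by rw [mul_comm]; exact markov]
      have heq : (v + t^2) / c^2 = v / (μ ^ 2 + v) := by
        rw [hc, ht]
        have hμne : μ ≠ 0 := ne_of_gt hμpos
        have hdne : μ ^ 2 + v ≠ 0 := ne_of_gt hden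
        field_simp
      rwa [heq] at step
  -- transfer to D and D'
  have hDset : ℙ {ω | D ω < 0} = ℙ {ω | (X - Y) ω < 0} := by
    have h := hDid.measure_mem_eq (measurableSet_Iio (a := (0:ℝ)))
    simpa [Set.preimage, Set.mem_Iio] using h
  have hD'set : ℙ {ω | D' ω < 0} = ℙ {ω | (X - Y) ω < 0} := by
    have h := hD'id.measure_mem_eq (measurableSet_Iio (a := (0:ℝ)))
    simpa [Set.preimage, Set.mem_Iio] using h
  have hU : ℙ ({ω | D ω > 0 ∧ D' ω < 0} ∪ {ω | D ω < 0 ∧ D' ω > 0})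
      ≤ ℙ {ω | D' ω < 0} + ℙ {ω | D ω < 0} := by
    refine le_trans (measure_union_le _ _) (add_le_add ?_ ?_)
    · exact measure_mono fun ω h => h.2
    · exact measure_mono fun ω h => h.1
  have hfin : ℙ {ω | D' ω < 0} + ℙ {ω | D ω < 0} ≠ ⊤ :=
    ENNReal.add_ne_top.mpr ⟨measure_ne_top _ _, measure_ne_top _ _⟩
  have hmain : (ℙ ({ω | D ω > 0 ∧ D' ω < 0} ∪ {ω | D ω < 0 ∧ D' ω > 0})).toReal
      ≤ 2 * (v / (μ ^ 2 + v)) := by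
    calc (ℙ ({ω | D ω > 0 ∧ D' ω < 0} ∪ {ω | D ω < 0 ∧ D' ω > 0})).toReal
        ≤ (ℙ {ω | D' ω < 0} + ℙ {ω | D ω < 0}).toReal := ENNReal.toReal_mono hfin hU
      _ = (ℙ {ω | D' ω < 0}).toReal + (ℙ {ω | D ω < 0}).toReal :=
          ENNReal.toReal_add (measure_ne_top _ _) (measure_ne_top _ _)
      _ ≤ v / (μ ^ 2 + v) + v / (μ ^ 2 + v) := by
          rw [hDset, hD'set]; exact add_le_add cantelli cantelli
      _ = 2 * (v / (μ ^ 2 + v)) := by ring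
  have hfinal : 2 * (v / (μ ^ 2 + v)) = 4 * σ2 * (1 - ρ) / (μ ^ 2 + 2 * σ2 * (1 - ρ)) := by
    rw [hv]; ring
  rwa [hfinal] at hmain
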